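/- Let β ≥ 0, let {a_k} be a strongly increasing positive sequence, {b_k} a positive sequence, and let {d_{k,i}} be a regular kernel: nonnegative, non-increasing in k, non-decreasing in i, and satisfying d_{k,i} ≲ d_{k,j} + d_{j,i} for all k ≤ j ≤ i. Then sup_k a_k (Σ_{i=k}^{M} d_{k,i+1} b_i)^β ≈ sup_k a_k d_{k,k+1}^β (Σ_{i=k}^{M} b_i)^β, with constants depending only on β, the increase ratio, and the kernel constant. -/

import Mathlib

set_option maxHeartbeats 1000000

open ENNReal

/-- The set of integers `k` with `N ≤ k ≤ M`, where `N, M` are extended reals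
(so that `N = -∞` or `M = +∞` are allowed). -/
def zset (N M : EReal) : Set ℤ := {k : ℤ | N ≤ ((k : ℝ) : EReal) ∧ ((k : ℝ) : EReal) ≤ M}

lemma Icc_eq_Ico_int (k i : ℤ) : Finset.Icc k i = Finset.Ico k (i+1) := by
  ext x; simp [Finset.mem_Icc, Finset.mem_Ico]

/-- Core chaining fact for regular kernels. -/
lemma kernel_chain (cd : ℝ) (hcd : 1 ≤ cd) (α : ℝ) (hα : 0 < α)
    (hα2 : (4:ℝ) * cd ^ 2 ≤ (2:ℝ) ^ (α⁻¹))
    (d : ℤ → ℤ → ℝ) (hd0 : ∀ k i, 0 ≤ d k i)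
    (hd4 : ∀ k j i : ℤ, k ≤ j → j ≤ i → d k i ≤ cd * (d k j + d j i)) :
    ∀ k i : ℤ, k ≤ i →
      d k (i+1) ≤ 2 * cd ^ 2 * (∑ j ∈ Finset.Icc k i, d j (j+1) ^ α) ^ (α⁻¹) := by
  have hcd0 : (0:ℝ) < cd := lt_of_lt_of_le one_pos hcd
  have hp : 0 < α⁻¹ := by positivity
  have h2p : (0:ℝ) < (2:ℝ) ^ (α⁻¹) := Real.rpow_pos_of_pos (by norm_num) _
  have hK1 : (1:ℝ) ≤ 2 * cd ^ 2 := by nlinarith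
  have hcanc : ∀ x : ℝ, 0 ≤ x → (x ^ α) ^ (α⁻¹) = x := by
    intro x hx
    rw [← Real.rpow_mul hx, mul_inv_cancel₀ hα.ne', Real.rpow_one]
  have hsum0 : ∀ (s : Finset ℤ), 0 ≤ ∑ j ∈ s, d j (j+1) ^ α := by
    intro s; exact Finset.sum_nonneg fun j _ => Real.rpow_nonneg (hd0 _ _) _
  suffices H : ∀ n : ℕ, ∀ k i : ℤ, k ≤ i → (i - k).toNat = n →
      d k (i+1) ≤ 2 * cd ^ 2 * (∑ j ∈ Finset.Icc k i, d j (j+1) ^ α) ^ (α⁻¹) by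
    exact fun k i h => H _ k i h rfl
  intro n
  induction n using Nat.strong_induction_on with
  | _ n IH =>
  intro k i hki hn
  set S := ∑ j ∈ Finset.Icc k i, d j (j+1) ^ α with hS
  have hS0 : 0 ≤ S := hsum0 _
  -- single term bound : for j ∈ Icc k i, d j (j+1) ≤ S ^ α⁻¹
  have hsingle : ∀ j : ℤ, k ≤ j → j ≤ i → d j (j+1) ≤ S ^ (α⁻¹) := by
    intro j h1 h2
    have : d j (j+1) ^ α ≤ S :=
      Finset.single_le_sum (f := fun j => d j (j+1) ^ α)
        (fun l _ => Real.rpow_nonneg (hd0 _ _) _) (Finset.mem_Icc.mpr ⟨h1, h2⟩)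
    calc d j (j+1) = (d j (j+1) ^ α) ^ (α⁻¹) := (hcanc _ (hd0 _ _)).symm
      _ ≤ S ^ (α⁻¹) := Real.rpow_le_rpow (Real.rpow_nonneg (hd0 _ _) _) this hp.le
  rcases Nat.eq_zero_or_pos n with hn0 | hnpos
  · -- base case i = k
    have hik : i = k := by omega
    subst hik
    rw [hS, Finset.Icc_self, Finset.sum_singleton, hcanc _ (hd0 _ _)]
    nlinarith [hd0 i (i+1)]
  -- n ≥ 1, so k < i
  have hki' : k + 1 ≤ i := by omega
  rcases eq_or_lt_of_le hS0 with hSz | hSpos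
  · -- S = 0 : everything vanishes
    have hz : ∀ j : ℤ, k ≤ j → j ≤ i → d j (j+1) = 0 := by
      intro j h1 h2
      have := hsingle j h1 h2
      rw [← hSz, Real.zero_rpow hp.ne'] at this
      exact le_antisymm this (hd0 _ _)
    have hki0 : d k i ≤ 0 := by
      have h1 : d k ((i-1)+1) ≤ 2 * cd ^ 2 *
          (∑ j ∈ Finset.Icc k (i-1), d j (j+1) ^ α) ^ (α⁻¹) := by
        refine IH (n-1) (by omega) k (i-1) (by omega) (by omega)
      have h2 : ∑ j ∈ Finset.Icc k (i-1), d j (j+1) ^ α = 0 := by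
        refine Finset.sum_eq_zero fun j hj => ?_
        rw [Finset.mem_Icc] at hj
        rw [hz j hj.1 (by omega), Real.zero_rpow hα.ne']
      rw [h2, Real.zero_rpow hp.ne', mul_zero] at h1
      simpa using h1
    have := hd4 k i (i+1) hki (by omega)
    rw [hz i hki le_rfl] at this
    have : d k (i+1) ≤ 0 := by nlinarith
    calc d k (i+1) ≤ 0 := this
      _ ≤ _ := by positivity
  · -- S > 0 : bisection
    set P : ℤ → ℝ := fun m => ∑ j ∈ Finset.Ico k m, d j (j+1) ^ α with hP
    have hPsplit : ∀ m : ℤ, k ≤ m → m ≤ i + 1 →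
        P m + ∑ j ∈ Finset.Ico m (i+1), d j (j+1) ^ α = S := by
      intro m h1 h2
      rw [hS, Icc_eq_Ico_int, hP]
      rw [← Finset.sum_union (Finset.Ico_disjoint_Ico_consecutive k m (i+1)),
        Finset.Ico_union_Ico_eq_Ico h1 h2]
    have hTne : ((Finset.Icc k i).filter (fun m => P m ≤ S / 2)).Nonempty := by
      refine ⟨k, Finset.mem_filter.mpr ⟨Finset.mem_Icc.mpr ⟨le_rfl, hki⟩, ?_⟩⟩
      simp [hP]
      positivity
    set j := ((Finset.Icc k i).filter (fun m => P m ≤ S / 2)).max' hTne with hj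
    have hjmem : j ∈ (Finset.Icc k i).filter (fun m => P m ≤ S / 2) :=
      Finset.max'_mem _ hTne
    rw [Finset.mem_filter, Finset.mem_Icc] at hjmem
    obtain ⟨⟨hkj, hji⟩, hPj⟩ := hjmem
    have hmax : ∀ m : ℤ, k ≤ m → m ≤ i → P m ≤ S / 2 → m ≤ j := by
      intro m h1 h2 h3
      exact Finset.le_max' _ m (Finset.mem_filter.mpr ⟨Finset.mem_Icc.mpr ⟨h1, h2⟩, h3⟩)
    clear_value j
    clear hj hTne
    set u := S ^ (α⁻¹) with hu
    set v := (S/2) ^ (α⁻¹) with hv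
    have hSp0 : 0 < u := Real.rpow_pos_of_pos hSpos _
    have hv0 : 0 < v := Real.rpow_pos_of_pos (by positivity) _
    clear_value u v
    -- key: 4 cd^2 * v ≤ u
    have hkey : 4 * cd^2 * v ≤ u := by
      have h1 : 4 * cd^2 * v ≤ (2:ℝ) ^ (α⁻¹) * v := mul_le_mul_of_nonneg_right hα2 hv0.le
      have h2 : (2:ℝ) ^ (α⁻¹) * v = u := by
        rw [hv, hu, ← Real.mul_rpow (by norm_num) (by positivity),
          show (2:ℝ)*(S/2) = S by ring]
      linarith
    -- prefix bounds
    have hpre : ∀ m : ℤ, k < m → m ≤ i → P m ≤ S / 2 → d k m ≤ 2 * cd^2 * v := by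
      intro m h1 h2 h3
      have h4 : d k ((m-1)+1) ≤ 2 * cd ^ 2 *
          (∑ l ∈ Finset.Icc k (m-1), d l (l+1) ^ α) ^ (α⁻¹) :=
        IH ((m-1-k).toNat) (by omega) k (m-1) (by omega) rfl
      have h5 : ∑ l ∈ Finset.Icc k (m-1), d l (l+1) ^ α = P m := by
        rw [hP, Icc_eq_Ico_int]; norm_num
      have h6 : (P m) ^ (α⁻¹) ≤ v := by
        rw [hv]
        refine Real.rpow_le_rpow ?_ h3 hp.le
        exact Finset.sum_nonneg fun l _ => Real.rpow_nonneg (hd0 _ _) _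
      have he : (m-1)+1 = m := by ring
      rw [he, h5] at h4
      calc d k m ≤ 2*cd^2 * (P m) ^ (α⁻¹) := h4
        _ ≤ 2*cd^2*v := by nlinarith
    -- bound for d k (j+1)
    have hdkj1 : d k (j+1) ≤ cd * (2 * cd ^ 2 * v + u) := by
      rcases eq_or_lt_of_le hkj with hjk | hjk
      · have h5 := hsingle k le_rfl hki
        rw [← hjk]
        nlinarith [mul_nonneg (mul_nonneg hcd0.le (by positivity : (0:ℝ) ≤ 2*cd^2)) hv0.le,
          mul_nonneg (sub_nonneg.mpr hcd) hSp0.le]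
      · have h1 : d k (j+1) ≤ cd * (d k j + d j (j+1)) := hd4 k j (j+1) hkj (by omega)
        have h2 : d k j ≤ 2 * cd^2 * v := hpre j hjk hji hPj
        have h5 := hsingle j hkj hji
        nlinarith [mul_le_mul_of_nonneg_left h2 hcd0.le,
          mul_le_mul_of_nonneg_left h5 hcd0.le]
    rcases eq_or_lt_of_le hji with hij | hij
    · -- j = i : split at i
      have h1 : d k (i+1) ≤ cd * (d k i + d i (i+1)) := hd4 k i (i+1) hki (by omega)
      have h2 : d k i ≤ 2 * cd^2 * v := hpre i (by omega) le_rfl (hij ▸ hPj)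
      have h5 := hsingle i hki le_rfl
      have m2 : cd * (4*cd^2*v) ≤ cd * u := mul_le_mul_of_nonneg_left hkey hcd0.le
      have m3 : cd * u ≤ cd^2 * u := by nlinarith [mul_nonneg (mul_nonneg hcd0.le (sub_nonneg.mpr hcd)) hSp0.le]
      nlinarith [mul_le_mul_of_nonneg_left h2 hcd0.le, mul_le_mul_of_nonneg_left h5 hcd0.le]
    · -- j < i : three-way split
      have hPj1 : S / 2 < P (j+1) := by
        by_contra h
        push_neg at h
        have := hmax (j+1) (by omega) (by omega) h
        omega
      have htail : ∑ l ∈ Finset.Ico (j+1) (i+1), d l (l+1) ^ α ≤ S / 2 := by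
        have := hPsplit (j+1) (by omega) (by omega)
        have hm : P (j+1) ≥ 0 := Finset.sum_nonneg fun l _ => Real.rpow_nonneg (hd0 _ _) _
        linarith
      have h1 : d k (i+1) ≤ cd * (d k (j+1) + d (j+1) (i+1)) :=
        hd4 k (j+1) (i+1) (by omega) (by omega)
      have h2 : d (j+1) (i+1) ≤ 2 * cd ^ 2 *
          (∑ l ∈ Finset.Icc (j+1) i, d l (l+1) ^ α) ^ (α⁻¹) :=
        IH ((i - (j+1)).toNat) (by omega) (j+1) i (by omega) rfl
      have h4 : d (j+1) (i+1) ≤ 2 * cd ^ 2 * v := by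
        have h3 : ∑ l ∈ Finset.Icc (j+1) i, d l (l+1) ^ α
            = ∑ l ∈ Finset.Ico (j+1) (i+1), d l (l+1) ^ α := by
          rw [Icc_eq_Ico_int]
        rw [h3] at h2
        have h5 : (∑ l ∈ Finset.Ico (j+1) (i+1), d l (l+1) ^ α) ^ (α⁻¹) ≤ v := by
          rw [hv]
          refine Real.rpow_le_rpow ?_ htail hp.le
          exact Finset.sum_nonneg fun l _ => Real.rpow_nonneg (hd0 _ _) _
        nlinarith
      have m1 : cd^2 * (4*cd^2*v) ≤ cd^2 * u :=
        mul_le_mul_of_nonneg_left hkey (by positivity)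
      have m2 : cd * (4*cd^2*v) ≤ cd * u := mul_le_mul_of_nonneg_left hkey hcd0.le
      have m3 : cd * u ≤ cd^2 * u := by
        nlinarith [mul_nonneg (mul_nonneg hcd0.le (sub_nonneg.mpr hcd)) hSp0.le]
      nlinarith [mul_le_mul_of_nonneg_left hdkj1 hcd0.le,
        mul_le_mul_of_nonneg_left h4 hcd0.le]


lemma coeZ_le {j k : ℤ} : ((j:ℝ):EReal) ≤ ((k:ℝ):EReal) ↔ j ≤ k := by
  rw [EReal.coe_le_coe_iff]
  exact_mod_cast Iff.rfl

lemma mem_zset_iff {j k : ℤ} {M : EReal} :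
    j ∈ zset ((k:ℝ):EReal) M ↔ k ≤ j ∧ ((j:ℝ):EReal) ≤ M := by
  simp [zset, Set.mem_setOf_eq, coeZ_le]

lemma sum_Icc_pow_le (s : ℝ≥0∞) (k i : ℤ) :
    (∑ j ∈ Finset.Icc k i, s ^ ((j - k).toNat)) ≤ (1 - s)⁻¹ := by
  have hinj : ∀ x ∈ Finset.Icc k i, ∀ y ∈ Finset.Icc k i,
      (x - k).toNat = (y - k).toNat → x = y := by
    intro x hx y hy h
    rw [Finset.mem_Icc] at hx hy
    omega
  calc (∑ j ∈ Finset.Icc k i, s ^ ((j - k).toNat))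
      = ∑ m ∈ (Finset.Icc k i).image (fun j => (j - k).toNat), s ^ m :=
        (Finset.sum_image hinj).symm
    _ ≤ ∑' m : ℕ, s ^ m := ENNReal.sum_le_tsum _
    _ = (1 - s)⁻¹ := ENNReal.tsum_geometric s

lemma tsum_zset_pow_le (s : ℝ≥0∞) (k : ℤ) (M : EReal) :
    (∑' j : zset ((k:ℝ):EReal) M, s ^ (((j:ℤ) - k).toNat)) ≤ (1 - s)⁻¹ := by
  rw [← ENNReal.tsum_geometric s]
  refine Summable.tsum_le_tsum_of_inj (fun j => (((j:ℤ) - k).toNat)) ?_ (fun _ _ => zero_le)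
    (fun _ => le_rfl) ENNReal.summable ENNReal.summable
  intro x y h
  have hx := (mem_zset_iff.mp x.2).1
  have hy := (mem_zset_iff.mp y.2).1
  ext
  simp only at h
  omega

lemma tsum_zset_tail (f : ℤ → ℝ≥0∞) (k j : ℤ) (M : EReal) (h : k ≤ j) :
    (∑' i : zset ((j:ℝ):EReal) M, f i)
      = ∑' i : zset ((k:ℝ):EReal) M, if j ≤ (i:ℤ) then f i else 0 := by
  classical
  have : (∑' i : zset ((k:ℝ):EReal) M, if j ≤ (i:ℤ) then f i else 0)
      = ∑' i : zset ((k:ℝ):EReal) M, (fun i : ℤ => if j ≤ i then f i else 0) (i : ℤ) := rfl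
  rw [this, _root_.tsum_subtype (zset ((j:ℝ):EReal) M) f,
    _root_.tsum_subtype (zset ((k:ℝ):EReal) M) (fun i : ℤ => if j ≤ i then f i else 0)]
  congr 1
  funext i
  simp only [Set.indicator_apply]
  by_cases h1 : j ≤ i <;> by_cases h2 : ((i:ℝ):EReal) ≤ M <;>
    simp [mem_zset_iff, h1, h2, h.trans, le_of_lt, if_pos, if_neg] <;> omega

lemma finset_Icc_eq_tsum (g : ℤ → ℝ≥0∞) (k i : ℤ) :
    (∑ j ∈ Finset.Icc k i, g j) = ∑' m : ℕ, if (k + (m:ℤ)) ≤ i then g (k + m) else 0 := by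
  classical
  rw [tsum_eq_sum (s := Finset.range ((i + 1 - k).toNat))
    (by intro m hm; rw [if_neg]; simp at hm; omega)]
  refine (Finset.sum_nbij' (i := fun j => (j - k).toNat) (j := fun (m : ℕ) => k + (m:ℤ))
    ?_ ?_ ?_ ?_ ?_)
  · intro a ha; rw [Finset.mem_Icc] at ha; simp only [Finset.mem_range]; omega
  · intro m hm; simp only [Finset.mem_range] at hm; simp only [Finset.mem_Icc]; omega
  · intro a ha; rw [Finset.mem_Icc] at ha; beta_reduce; omega
  · intro m hm; simp only [Finset.mem_range] at hm; beta_reduce; omega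
  · intro a ha; rw [Finset.mem_Icc] at ha
    beta_reduce
    rw [Int.toNat_of_nonneg (by omega : (0:ℤ) ≤ a - k)]
    rw [if_pos (by omega)]
    congr 1
    omega

lemma pow_rpow_comm (x : ℝ≥0∞) (m : ℕ) (y : ℝ) : (x ^ m) ^ y = (x ^ y) ^ m := by
  rw [← ENNReal.rpow_natCast x m, ← ENNReal.rpow_mul, mul_comm, ENNReal.rpow_mul,
    ENNReal.rpow_natCast]

lemma rpow_rpow_inv_self (x : ℝ≥0∞) (y : ℝ) (hy : y ≠ 0) : (x ^ y) ^ (y⁻¹) = x := by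
  rw [← ENNReal.rpow_mul, mul_inv_cancel₀ hy, ENNReal.rpow_one]

theorem sup_kernel_sum_of_strongly_increasing (β ρ cd : ℝ)
    (hβ : 0 ≤ β) (hρ : 1 < ρ) (hcd : 0 < cd) :
    ∃ c C : ℝ, 0 < c ∧ 0 < C ∧
      ∀ (N M : EReal), N < M → ∀ (a b : ℤ → ℝ) (d : ℤ → ℤ → ℝ),
        (∀ k, 0 < a k) → (∀ k, 0 < b k) →
        (∀ k : ℤ, k ∈ zset N M → (k + 1) ∈ zset N M → ρ * a k ≤ a (k + 1)) →
        (∀ k i, 0 ≤ d k i) →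
        (∀ k j i : ℤ, k ≤ j → d j i ≤ d k i) →
        (∀ k j i : ℤ, j ≤ i → d k j ≤ d k i) →
        (∀ k j i : ℤ, k ≤ j → j ≤ i → d k i ≤ cd * (d k j + d j i)) →
        ENNReal.ofReal c *
            (⨆ k : zset N M, ENNReal.ofReal (a (k : ℤ)) *
                ENNReal.ofReal (d (k : ℤ) ((k : ℤ) + 1)) ^ β *
                (∑' i : zset (((k : ℤ) : ℝ) : EReal) M, ENNReal.ofReal (b (i : ℤ))) ^ β) ≤
          (⨆ k : zset N M, ENNReal.ofReal (a (k : ℤ)) *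
              (∑' i : zset (((k : ℤ) : ℝ) : EReal) M,
                ENNReal.ofReal (d (k : ℤ) ((i : ℤ) + 1)) * ENNReal.ofReal (b (i : ℤ))) ^ β) ∧
        (⨆ k : zset N M, ENNReal.ofReal (a (k : ℤ)) *
            (∑' i : zset (((k : ℤ) : ℝ) : EReal) M,
              ENNReal.ofReal (d (k : ℤ) ((i : ℤ) + 1)) * ENNReal.ofReal (b (i : ℤ))) ^ β) ≤
          ENNReal.ofReal C *
            (⨆ k : zset N M, ENNReal.ofReal (a (k : ℤ)) *
                ENNReal.ofReal (d (k : ℤ) ((k : ℤ) + 1)) ^ β *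
                (∑' i : zset (((k : ℤ) : ℝ) : EReal) M, ENNReal.ofReal (b (i : ℤ))) ^ β) := by
  classical
  -- constants
  set cd' : ℝ := max cd 1 with hcd'def
  have hcd' : 1 ≤ cd' := le_max_right _ _
  have hcd'0 : 0 < cd' := lt_of_lt_of_le one_pos hcd'
  set α : ℝ := (max (Real.logb 2 (4 * cd' ^ 2)) 1)⁻¹ with hαdef
  have hmax1 : (1:ℝ) ≤ max (Real.logb 2 (4 * cd' ^ 2)) 1 := le_max_right _ _
  have hα : 0 < α := by rw [hαdef]; positivity
  have hαinv : α⁻¹ = max (Real.logb 2 (4 * cd' ^ 2)) 1 := by rw [hαdef, inv_inv]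
  have hα2 : 4 * cd' ^ 2 ≤ (2:ℝ) ^ (α⁻¹) := by
    rw [hαinv]
    calc 4 * cd' ^ 2 = (2:ℝ) ^ (Real.logb 2 (4 * cd' ^ 2)) :=
          (Real.rpow_logb (by norm_num) (by norm_num) (by positivity)).symm
      _ ≤ (2:ℝ) ^ (max (Real.logb 2 (4 * cd' ^ 2)) 1) :=
          Real.rpow_le_rpow_of_exponent_le (by norm_num) (le_max_left _ _)
  have hβ' : 0 ≤ β := hβ
  set K : ℝ := 2 * cd' ^ 2 with hKdef
  have hK0 : 0 < K := by rw [hKdef]; positivity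
  set s2 : ℝ := ρ ^ (-(2 * β)⁻¹) with hs2def
  have hρ0 : (0:ℝ) < ρ := lt_trans one_pos hρ
  have hs20 : 0 < s2 := Real.rpow_pos_of_pos hρ0 _
  set r1 : ℝ := s2 ^ α with hr1def
  have hr10 : 0 < r1 := Real.rpow_pos_of_pos hs20 _
  set cg1 : ℝ := (1 - r1)⁻¹ with hcg1def
  set cg2 : ℝ := (1 - s2)⁻¹ with hcg2def
  set Kbig : ℝ := K * cg1 ^ (α⁻¹) * cg2 with hKbigdef
  refine ⟨1, max 1 (Kbig ^ β), one_pos, lt_of_lt_of_le one_pos (le_max_left _ _), ?_⟩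
  intro N M hNM a b d ha hb hinc hd0 hd1 hd2 hd4
  have hd4' : ∀ k j i : ℤ, k ≤ j → j ≤ i → d k i ≤ cd' * (d k j + d j i) := by
    intro k j i h1 h2
    calc d k i ≤ cd * (d k j + d j i) := hd4 k j i h1 h2
      _ ≤ cd' * (d k j + d j i) := by
          apply mul_le_mul_of_nonneg_right (le_max_left _ _)
          have := hd0 k j; have := hd0 j i; linarith
  have hchain := kernel_chain cd' hcd' α hα hα2 d hd0 hd4'
  constructor
  · -- lower bound with c = 1
    rw [ENNReal.ofReal_one, one_mul]
    apply iSup_mono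
    rintro ⟨k, hk⟩
    simp only
    rw [mul_assoc]
    apply mul_le_mul_right
    rw [← ENNReal.mul_rpow_of_nonneg _ _ hβ']
    apply ENNReal.rpow_le_rpow _ hβ'
    rw [← ENNReal.tsum_mul_left]
    apply Summable.tsum_le_tsum _ ENNReal.summable ENNReal.summable
    rintro ⟨i, hi⟩
    simp only
    apply mul_le_mul_left
    apply ENNReal.ofReal_le_ofReal
    apply hd2
    have := (mem_zset_iff.mp hi).1
    omega
  · -- upper bound
    set A := (⨆ k : zset N M, ENNReal.ofReal (a (k : ℤ)) *
        ENNReal.ofReal (d (k : ℤ) ((k : ℤ) + 1)) ^ β *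
        (∑' i : zset (((k : ℤ) : ℝ) : EReal) M, ENNReal.ofReal (b (i : ℤ))) ^ β) with hA
    have hC1 : (1:ℝ≥0∞) ≤ ENNReal.ofReal (max 1 (Kbig ^ β)) :=
      ENNReal.one_le_ofReal.mpr (le_max_left _ _)
    by_cases hAtop : A = ⊤
    · rw [hAtop, ENNReal.mul_top (by intro h; rw [h] at hC1; simp at hC1)]
      exact le_top
    by_cases hβ0 : β = 0
    · subst hβ0
      refine le_trans ?_ (le_mul_of_one_le_left zero_le hC1)
      rw [hA]
      apply iSup_mono
      intro i
      simp
    have hβpos : 0 < β := lt_of_le_of_ne hβ' (Ne.symm hβ0)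
    have hs21 : s2 < 1 := by
      rw [hs2def]
      apply Real.rpow_lt_one_of_one_lt_of_neg hρ
      rw [neg_lt, neg_zero]
      positivity
    have hr11 : r1 < 1 := by
      rw [hr1def]
      exact Real.rpow_lt_one hs20.le hs21 hα
    have hcg10 : 0 < cg1 := by rw [hcg1def]; exact inv_pos.mpr (by linarith)
    have hcg20 : 0 < cg2 := by rw [hcg2def]; exact inv_pos.mpr (by linarith)
    have hKbig0 : 0 < Kbig := by rw [hKbigdef]; positivity
    apply iSup_le
    rintro ⟨k, hk⟩
    simp only
    obtain ⟨hNk, hkM⟩ := hk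
    -- notation
    set B : ℤ → ℝ≥0∞ := fun j => ∑' i : zset ((j:ℝ):EReal) M, ENNReal.ofReal (b (i:ℤ)) with hB
    set R2 : ℝ≥0∞ := ENNReal.ofReal s2 with hR2
    have hR2lt1 : R2 < 1 := ENNReal.ofReal_lt_one.mpr hs21
    have hR2top : R2 ≠ ⊤ := ofReal_ne_top
    set T : ℝ≥0∞ := (A / ENNReal.ofReal (a k)) ^ (β⁻¹) with hT
    have hak0 : ENNReal.ofReal (a k) ≠ 0 := (ENNReal.ofReal_pos.mpr (ha k)).ne'
    have hTtop : T ≠ ⊤ := by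
      rw [hT]
      apply ENNReal.rpow_ne_top_of_nonneg (by positivity)
      exact (ENNReal.div_lt_top hAtop hak0).ne
    have hBpos : ∀ j : ℤ, ((j:ℝ):EReal) ≤ M → B j ≠ 0 := by
      intro j hj
      have h1 : ENNReal.ofReal (b j) ≤ B j := by
        rw [hB]
        exact ENNReal.le_tsum (⟨j, mem_zset_iff.mpr ⟨le_rfl, hj⟩⟩ : zset ((j:ℝ):EReal) M)
      have h2 : (0:ℝ≥0∞) < ENNReal.ofReal (b j) := ENNReal.ofReal_pos.mpr (hb j)
      exact (lt_of_lt_of_le h2 h1).ne'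
    -- strong increase
    have hinc' : ∀ m : ℕ, (((k + m : ℤ):ℝ):EReal) ≤ M → ρ ^ m * a k ≤ a (k + m) := by
      intro m
      induction m with
      | zero => simp
      | succ m IH =>
        intro hm
        have hle : ((k + m : ℤ)) ≤ (k + (m+1) : ℤ) := by omega
        have hm' : (((k + m : ℤ):ℝ):EReal) ≤ M := le_trans (coeZ_le.mpr hle) hm
        have h1 := hinc (k + m) ⟨le_trans hNk (coeZ_le.mpr (by omega)), hm'⟩
          ⟨le_trans hNk (coeZ_le.mpr (by omega)),
            by rw [show ((k:ℤ) + m + 1) = (k + (m+1) : ℤ) by push_cast; ring]; exact hm⟩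
        have h2 := IH hm'
        have h3 : ρ ^ (m+1) * a k = ρ * (ρ ^ m * a k) := by ring
        rw [h3, show (k + (m+1:ℕ) : ℤ) = (k + m) + 1 by push_cast; ring]
        calc ρ * (ρ ^ m * a k) ≤ ρ * a (k + m) :=
              mul_le_mul_of_nonneg_left h2 hρ0.le
          _ ≤ a (k + m + 1) := h1
    -- the A-term bound
    have hAub : ∀ j : ℤ, ((j:ℝ):EReal) ≤ M → k ≤ j →
        ENNReal.ofReal (a j) * ENNReal.ofReal (d j (j+1)) ^ β * (B j) ^ β ≤ A := by
      intro j h1 h2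
      rw [hA]
      exact le_iSup_of_le ⟨j, le_trans hNk (coeZ_le.mpr h2), h1⟩ le_rfl
    -- key pointwise bound
    have hkey : ∀ j : ℤ, k ≤ j → ((j:ℝ):EReal) ≤ M →
        ENNReal.ofReal (d j (j+1)) ≤ T * (R2 ^ 2) ^ ((j - k).toNat) * (B j)⁻¹ := by
      intro j hkj hjM
      set m : ℕ := (j - k).toNat with hm
      have hjm : (k + (m:ℤ)) = j := by rw [hm]; omega
      have hak : ENNReal.ofReal (ρ ^ m * a k) ≤ ENNReal.ofReal (a j) := by
        apply ENNReal.ofReal_le_ofReal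
        have := hinc' m (by rw [hjm]; exact hjM)
        rw [hjm] at this
        exact this
      have hrmak0 : ENNReal.ofReal (ρ ^ m * a k) ≠ 0 :=
        (ENNReal.ofReal_pos.mpr (mul_pos (pow_pos hρ0 m) (ha k))).ne'
    -- step 1
      have step1 : (ENNReal.ofReal (d j (j+1)) * B j) ^ β * ENNReal.ofReal (ρ ^ m * a k) ≤ A := by
        rw [ENNReal.mul_rpow_of_nonneg _ _ hβ', mul_comm]
        calc ENNReal.ofReal (ρ ^ m * a k) *
              (ENNReal.ofReal (d j (j+1)) ^ β * (B j) ^ β)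
            ≤ ENNReal.ofReal (a j) * (ENNReal.ofReal (d j (j+1)) ^ β * (B j) ^ β) :=
              mul_le_mul_left hak _
          _ = ENNReal.ofReal (a j) * ENNReal.ofReal (d j (j+1)) ^ β * (B j) ^ β := by ring
          _ ≤ A := hAub j hjM hkj
      have step2 : ENNReal.ofReal (d j (j+1)) * B j ≤
          (A / ENNReal.ofReal (ρ ^ m * a k)) ^ (β⁻¹) := by
        have h1 : (ENNReal.ofReal (d j (j+1)) * B j) ^ β ≤ A / ENNReal.ofReal (ρ ^ m * a k) :=
          (ENNReal.le_div_iff_mul_le (Or.inl hrmak0) (Or.inl ofReal_ne_top)).mpr step1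
        have h2 := ENNReal.rpow_le_rpow h1 (by positivity : (0:ℝ) ≤ β⁻¹)
        rwa [← ENNReal.rpow_mul, mul_inv_cancel₀ hβpos.ne', ENNReal.rpow_one] at h2
      have step4 : (A / ENNReal.ofReal (ρ ^ m * a k)) ^ (β⁻¹) ≤ T * (R2 ^ 2) ^ m := by
        have e1 : A / ENNReal.ofReal (ρ ^ m * a k)
            = (A / ENNReal.ofReal (a k)) * (ENNReal.ofReal (ρ ^ m))⁻¹ := by
          rw [ENNReal.ofReal_mul (by positivity)]
          rw [div_eq_mul_inv A, div_eq_mul_inv A,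
            ENNReal.mul_inv (Or.inl (ENNReal.ofReal_pos.mpr (by positivity)).ne')
              (Or.inl ofReal_ne_top)]
          ring
        rw [e1, ENNReal.mul_rpow_of_nonneg _ _ (by positivity : (0:ℝ) ≤ β⁻¹), ← hT]
        apply mul_le_mul_right
        -- ((ofReal (ρ^m))⁻¹) ^ β⁻¹ = (R2^2)^m
        have e2 : ((ENNReal.ofReal (ρ ^ m))⁻¹ : ℝ≥0∞) ^ (β⁻¹) = (R2 ^ 2) ^ m := by
          rw [← ENNReal.ofReal_inv_of_pos (by positivity),
            ENNReal.ofReal_rpow_of_pos (by positivity)]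
          have e3 : ((ρ ^ m : ℝ)⁻¹) ^ (β⁻¹ : ℝ) = s2 ^ (2 * m) := by
            rw [← Real.rpow_natCast ρ m, ← Real.rpow_neg hρ0.le,
              ← Real.rpow_mul hρ0.le, hs2def, ← Real.rpow_natCast (ρ ^ (-(2*β)⁻¹)) (2*m),
              ← Real.rpow_mul hρ0.le]
            congr 1
            push_cast
            field_simp
          rw [e3, hR2, ENNReal.ofReal_pow hs20.le, pow_mul]
        rw [e2]
      have step5 : ENNReal.ofReal (d j (j+1)) * B j ≤ T * (R2 ^ 2) ^ m := le_trans step2 step4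
      have hV : T * (R2 ^ 2) ^ m ≠ ⊤ :=
        ENNReal.mul_ne_top hTtop (pow_ne_top (pow_ne_top hR2top))
      have h6 : ENNReal.ofReal (d j (j+1)) ≤ T * (R2 ^ 2) ^ m / B j :=
        (ENNReal.le_div_iff_mul_le (Or.inl (hBpos j hjM)) (Or.inr hV)).mpr step5
      rwa [div_eq_mul_inv] at h6
    -- geometric constants in ENNReal
    set SG : ℝ≥0∞ := R2 ^ α with hSG
    have hSGr1 : SG = ENNReal.ofReal r1 := by
      rw [hSG, hR2, hr1def, ENNReal.ofReal_rpow_of_nonneg hs20.le hα.le]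
    set CG1 : ℝ≥0∞ := (1 - SG)⁻¹ with hCG1
    set CG2 : ℝ≥0∞ := (1 - R2)⁻¹ with hCG2
    have hCG1eq : CG1 = ENNReal.ofReal cg1 := by
      rw [hCG1, hSGr1, hcg1def, ENNReal.ofReal_inv_of_pos (by linarith),
        ENNReal.ofReal_sub _ hr10.le, ENNReal.ofReal_one]
    have hCG2eq : CG2 = ENNReal.ofReal cg2 := by
      rw [hCG2, hR2, hcg2def, ENNReal.ofReal_inv_of_pos (by linarith),
        ENNReal.ofReal_sub _ hs20.le, ENNReal.ofReal_one]
    -- local sums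
    set G : ℤ → ℝ≥0∞ := fun i => ∑ j ∈ Finset.Icc k i, R2 ^ ((j - k).toNat) * (B j)⁻¹ with hG
    -- per-i bound
    have hti : ∀ i : ℤ, k ≤ i → ((i:ℝ):EReal) ≤ M →
        ENNReal.ofReal (d k (i+1)) ≤ ENNReal.ofReal K * CG1 ^ (α⁻¹) * (T * G i) := by
      intro i hki hiM
      have h1 : ENNReal.ofReal (d k (i+1)) ≤
          ENNReal.ofReal K * (∑ j ∈ Finset.Icc k i, ENNReal.ofReal (d j (j+1)) ^ α)
            ^ (α⁻¹) := by
        calc ENNReal.ofReal (d k (i+1))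
            ≤ ENNReal.ofReal (K * (∑ j ∈ Finset.Icc k i, d j (j+1) ^ α) ^ (α⁻¹)) :=
              ENNReal.ofReal_le_ofReal (hchain k i hki)
          _ = ENNReal.ofReal K * (∑ j ∈ Finset.Icc k i, ENNReal.ofReal (d j (j+1)) ^ α)
              ^ (α⁻¹) := by
              rw [ENNReal.ofReal_mul hK0.le]
              congr 1
              rw [← ENNReal.ofReal_rpow_of_nonneg
                (Finset.sum_nonneg fun l _ => Real.rpow_nonneg (hd0 _ _) _) (by positivity),
                ENNReal.ofReal_sum_of_nonneg
                  (fun l _ => Real.rpow_nonneg (hd0 _ _) _)]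
              congr 1
              apply Finset.sum_congr rfl
              intro l _
              rw [ENNReal.ofReal_rpow_of_nonneg (hd0 _ _) hα.le]
      have h2 : (∑ j ∈ Finset.Icc k i, ENNReal.ofReal (d j (j+1)) ^ α)
          ≤ T ^ α * (G i) ^ α * CG1 := by
        have hterm : ∀ j ∈ Finset.Icc k i, ENNReal.ofReal (d j (j+1)) ^ α ≤
            T ^ α * (G i) ^ α * SG ^ ((j - k).toNat) := by
          intro j hj
          rw [Finset.mem_Icc] at hj
          have hjM : ((j:ℝ):EReal) ≤ M := le_trans (coeZ_le.mpr hj.2) hiM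
          have hk1 := hkey j hj.1 hjM
          calc ENNReal.ofReal (d j (j+1)) ^ α
              ≤ (T * (R2 ^ 2) ^ ((j - k).toNat) * (B j)⁻¹) ^ α :=
                ENNReal.rpow_le_rpow hk1 hα.le
            _ = T ^ α * SG ^ ((j - k).toNat) *
                  (R2 ^ ((j - k).toNat) * (B j)⁻¹) ^ α := by
                rw [show (R2 ^ 2) ^ ((j-k).toNat) = R2 ^ ((j-k).toNat) * R2 ^ ((j-k).toNat) by
                    rw [← pow_add, ← two_mul, pow_mul]]
                rw [show T * (R2 ^ ((j-k).toNat) * R2 ^ ((j-k).toNat)) * (B j)⁻¹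
                    = (T * R2 ^ ((j-k).toNat)) * (R2 ^ ((j-k).toNat) * (B j)⁻¹) by ring]
                rw [ENNReal.mul_rpow_of_nonneg _ _ hα.le,
                  ENNReal.mul_rpow_of_nonneg _ _ hα.le, pow_rpow_comm R2 _ α]
            _ ≤ T ^ α * SG ^ ((j - k).toNat) * (G i) ^ α := by
                apply mul_le_mul_right
                apply ENNReal.rpow_le_rpow _ hα.le
                rw [hG]
                beta_reduce
                exact Finset.single_le_sum (f := fun j => R2 ^ ((j - k).toNat) * (B j)⁻¹)
                  (fun _ _ => zero_le) (Finset.mem_Icc.mpr hj)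
            _ = T ^ α * (G i) ^ α * SG ^ ((j - k).toNat) := by ring
        calc (∑ j ∈ Finset.Icc k i, ENNReal.ofReal (d j (j+1)) ^ α)
            ≤ ∑ j ∈ Finset.Icc k i, T ^ α * (G i) ^ α * SG ^ ((j - k).toNat) :=
              Finset.sum_le_sum hterm
          _ = T ^ α * (G i) ^ α * ∑ j ∈ Finset.Icc k i, SG ^ ((j - k).toNat) := by
              rw [Finset.mul_sum]
          _ ≤ T ^ α * (G i) ^ α * CG1 :=
              mul_le_mul_right (sum_Icc_pow_le SG k i) _
      calc ENNReal.ofReal (d k (i+1))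
          ≤ ENNReal.ofReal K * (∑ j ∈ Finset.Icc k i, ENNReal.ofReal (d j (j+1)) ^ α)
            ^ (α⁻¹) := h1
        _ ≤ ENNReal.ofReal K * (T ^ α * (G i) ^ α * CG1) ^ (α⁻¹) :=
            mul_le_mul_right (ENNReal.rpow_le_rpow h2 (by positivity)) _
        _ = ENNReal.ofReal K * CG1 ^ (α⁻¹) * (T * G i) := by
            rw [ENNReal.mul_rpow_of_nonneg _ _ (by positivity : (0:ℝ) ≤ α⁻¹),
              ENNReal.mul_rpow_of_nonneg _ _ (by positivity : (0:ℝ) ≤ α⁻¹),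
              rpow_rpow_inv_self _ _ hα.ne', rpow_rpow_inv_self _ _ hα.ne']
            ring
    -- sum the bound
    have hW : (∑' i : zset ((k:ℝ):EReal) M,
        ENNReal.ofReal (d k ((i:ℤ)+1)) * ENNReal.ofReal (b (i:ℤ)))
          ≤ ENNReal.ofReal K * CG1 ^ (α⁻¹) * T *
            (∑' i : zset ((k:ℝ):EReal) M, G (i:ℤ) * ENNReal.ofReal (b (i:ℤ))) := by
      rw [← ENNReal.tsum_mul_left]
      apply Summable.tsum_le_tsum _ ENNReal.summable ENNReal.summable
      rintro ⟨i, hi⟩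
      simp only
      obtain ⟨hki, hiM⟩ := mem_zset_iff.mp hi
      calc ENNReal.ofReal (d k (i+1)) * ENNReal.ofReal (b i)
          ≤ (ENNReal.ofReal K * CG1 ^ (α⁻¹) * (T * G i)) * ENNReal.ofReal (b i) :=
            mul_le_mul_left (hti i hki hiM) _
        _ = ENNReal.ofReal K * CG1 ^ (α⁻¹) * T * (G i * ENNReal.ofReal (b i)) := by ring
    -- bound the double sum by CG2
    have hZ : (∑' i : zset ((k:ℝ):EReal) M, G (i:ℤ) * ENNReal.ofReal (b (i:ℤ))) ≤ CG2 := by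
      have hGi : ∀ i : zset ((k:ℝ):EReal) M, G (i:ℤ) * ENNReal.ofReal (b (i:ℤ))
          = ∑' m : ℕ, (if (k + (m:ℤ)) ≤ (i:ℤ) then
              R2 ^ m * (B (k + (m:ℤ)))⁻¹ * ENNReal.ofReal (b (i:ℤ)) else 0) := by
        intro i
        rw [hG]
        beta_reduce
        rw [finset_Icc_eq_tsum (fun j => R2 ^ ((j - k).toNat) * (B j)⁻¹) k i]
        rw [← ENNReal.tsum_mul_right]
        apply tsum_congr
        intro m
        rw [ite_mul, zero_mul]
        congr 2
        norm_num
      calc (∑' i : zset ((k:ℝ):EReal) M, G (i:ℤ) * ENNReal.ofReal (b (i:ℤ)))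
          = ∑' (i : zset ((k:ℝ):EReal) M) (m : ℕ), (if (k + (m:ℤ)) ≤ (i:ℤ) then
              R2 ^ m * (B (k + (m:ℤ)))⁻¹ * ENNReal.ofReal (b (i:ℤ)) else 0) :=
            tsum_congr hGi
        _ = ∑' (m : ℕ) (i : zset ((k:ℝ):EReal) M), (if (k + (m:ℤ)) ≤ (i:ℤ) then
              R2 ^ m * (B (k + (m:ℤ)))⁻¹ * ENNReal.ofReal (b (i:ℤ)) else 0) :=
            ENNReal.tsum_comm
        _ ≤ ∑' m : ℕ, R2 ^ m := by
            apply Summable.tsum_le_tsum _ ENNReal.summable ENNReal.summable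
            intro m
            have e1 : (∑' i : zset ((k:ℝ):EReal) M, (if (k + (m:ℤ)) ≤ (i:ℤ) then
                R2 ^ m * (B (k + (m:ℤ)))⁻¹ * ENNReal.ofReal (b (i:ℤ)) else 0))
                = R2 ^ m * (B (k + (m:ℤ)))⁻¹ *
                  (∑' i : zset ((k:ℝ):EReal) M, (if (k + (m:ℤ)) ≤ (i:ℤ) then
                    ENNReal.ofReal (b (i:ℤ)) else 0)) := by
              rw [← ENNReal.tsum_mul_left]
              apply tsum_congr
              intro i
              rw [mul_ite, mul_zero]
            have hBapp : ∀ jj : ℤ, B jj = ∑' i : zset ((jj:ℝ):EReal) M,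
                ENNReal.ofReal (b (i:ℤ)) := fun jj => by rw [hB]
            rw [e1, ← tsum_zset_tail (fun i => ENNReal.ofReal (b i)) k (k + (m:ℤ)) M
              (by omega), ← hBapp (k + (m:ℤ))]
            calc R2 ^ m * (B (k + (m:ℤ)))⁻¹ * B (k + (m:ℤ))
                = R2 ^ m * ((B (k + (m:ℤ)))⁻¹ * B (k + (m:ℤ))) := by ring
              _ ≤ R2 ^ m * 1 := mul_le_mul_right (ENNReal.inv_mul_le_one _) _
              _ = R2 ^ m := mul_one _
        _ = CG2 := by rw [ENNReal.tsum_geometric, hCG2]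
    -- put it together
    have hWT : (∑' i : zset ((k:ℝ):EReal) M,
        ENNReal.ofReal (d k ((i:ℤ)+1)) * ENNReal.ofReal (b (i:ℤ)))
          ≤ ENNReal.ofReal Kbig * T := by
      calc (∑' i : zset ((k:ℝ):EReal) M,
          ENNReal.ofReal (d k ((i:ℤ)+1)) * ENNReal.ofReal (b (i:ℤ)))
          ≤ ENNReal.ofReal K * CG1 ^ (α⁻¹) * T *
            (∑' i : zset ((k:ℝ):EReal) M, G (i:ℤ) * ENNReal.ofReal (b (i:ℤ))) := hW
        _ ≤ ENNReal.ofReal K * CG1 ^ (α⁻¹) * T * CG2 := mul_le_mul_right hZ _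
        _ = ENNReal.ofReal Kbig * T := by
            have hofKbig : ENNReal.ofReal Kbig
                = ENNReal.ofReal K * ENNReal.ofReal (cg1 ^ (α⁻¹)) * ENNReal.ofReal cg2 := by
              rw [hKbigdef, ENNReal.ofReal_mul (by positivity), ENNReal.ofReal_mul hK0.le]
            rw [hCG1eq, hCG2eq, hofKbig, ENNReal.ofReal_rpow_of_pos hcg10]
            ring
    calc ENNReal.ofReal (a k) * (∑' i : zset ((k:ℝ):EReal) M,
          ENNReal.ofReal (d k ((i:ℤ)+1)) * ENNReal.ofReal (b (i:ℤ))) ^ β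
        ≤ ENNReal.ofReal (a k) * (ENNReal.ofReal Kbig * T) ^ β :=
          mul_le_mul_right (ENNReal.rpow_le_rpow hWT hβ') _
      _ = ENNReal.ofReal (Kbig ^ β) * (ENNReal.ofReal (a k) * (A / ENNReal.ofReal (a k))) := by
          rw [ENNReal.mul_rpow_of_nonneg _ _ hβ', hT, ← ENNReal.rpow_mul,
            inv_mul_cancel₀ hβpos.ne', ENNReal.rpow_one,
            ENNReal.ofReal_rpow_of_pos hKbig0]
          ring
      _ ≤ ENNReal.ofReal (Kbig ^ β) * A := mul_le_mul_right ENNReal.mul_div_le _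
      _ ≤ ENNReal.ofReal (max 1 (Kbig ^ β)) * A :=
          mul_le_mul_left (ENNReal.ofReal_le_ofReal (le_max_right _ _)) _
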